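/- arXiv:2103.15063 — 4 statements merged into one kernel-verified Lean document; each statement's English description precedes it below -/
import Mathlib

section
/- Let n be an even natural number with 4 ≤ n and suppose 4 divides n. Then for all real κ, η, the Wiener index of the saturated fuzzy cycle satisfies WI(n,κ,η) = (n^3/16)·(κ + η). -/
/-- Edge weight: the edge from `i` to `i+1` has weight `κ` if `i.val` is even,
and `η` if `i.val` is odd. -/
noncomputable def w (n : ℕ) (κ η : ℝ) (i : ZMod n) : ℝ :=
  if Even i.val then κ else η

/-- Forward arc weight: `A u k = Σ_{j=0}^{k-1} w (u + j)`. -/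
noncomputable def A (n : ℕ) (κ η : ℝ) (u : ZMod n) (k : ℕ) : ℝ :=
  ∑ j ∈ Finset.range k, w n κ η (u + (j : ZMod n))

/-- Cycle distance: `min (m, n - m)` where `v = u + m`, `0 ≤ m < n`. -/
def cdist (n : ℕ) (u v : ZMod n) : ℕ :=
  min (v - u).val (n - (v - u).val)

/-- Geodesic weight between `u` and `v`. -/
noncomputable def ds (n : ℕ) (κ η : ℝ) (u v : ZMod n) : ℝ :=
  if u = v then 0
  else if cdist n u v < n / 2 then
    (if v = u + (cdist n u v : ZMod n) then A n κ η u (cdist n u v)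
     else A n κ η v (cdist n u v))
  else min (A n κ η u (n / 2)) (A n κ η v (n / 2))

/-- Wiener index: sum of `ds` over unordered pairs of distinct vertices. -/
noncomputable def WI (n : ℕ) [NeZero n] (κ η : ℝ) : ℝ :=
  (1 / 2) * ∑ u : ZMod n, ∑ v : ZMod n, ds n κ η u v



lemma zmod_sum_range {n : ℕ} [NeZero n] (f : ZMod n → ℝ) :
    ∑ v : ZMod n, f v = ∑ m ∈ Finset.range n, f (m : ZMod n) := by
  refine Finset.sum_nbij' (fun v => v.val) (fun m => (m : ZMod n)) ?_ ?_ ?_ ?_ ?_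
  · intro a _; exact Finset.mem_range.2 (ZMod.val_lt a)
  · intro a _; exact Finset.mem_univ _
  · intro a _; exact ZMod.natCast_zmod_val a
  · intro a ha; exact ZMod.val_natCast_of_lt (Finset.mem_range.1 ha)
  · intro a _; rw [ZMod.natCast_zmod_val]

lemma sum_shift {n : ℕ} [NeZero n] (f : ZMod n → ℝ) (c : ZMod n) :
    ∑ u : ZMod n, f (u + c) = ∑ u : ZMod n, f u :=
  Fintype.sum_equiv (Equiv.addRight c) _ _ (fun _ => rfl)

lemma sum_range_alt (κ η : ℝ) (k : ℕ) :
    ∑ i ∈ Finset.range (2 * k), (if Even i then κ else η) = k * (κ + η) := by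
  induction k with
  | zero => simp
  | succ k ih =>
    have h : 2 * (k + 1) = (2 * k) + 1 + 1 := by ring
    rw [h, Finset.sum_range_succ, Finset.sum_range_succ, ih]
    have h1 : Even (2 * k) := even_two_mul k
    have h2 : ¬ Even (2 * k + 1) := by simp [Nat.even_add_one, h1]
    rw [if_pos h1, if_neg h2]
    push_cast; ring

lemma sum_w {n : ℕ} [NeZero n] (hE : Even n) (κ η : ℝ) :
    ∑ u : ZMod n, w n κ η u = (n / 2 : ℕ) * (κ + η) := by
  obtain ⟨k, hk⟩ := hE
  have hn : n = 2 * k := by omega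
  rw [zmod_sum_range]
  have : ∀ m ∈ Finset.range n, w n κ η (m : ZMod n) = (if Even m then κ else η) := by
    intro m hm
    rw [w, ZMod.val_natCast_of_lt (Finset.mem_range.1 hm)]
  rw [Finset.sum_congr rfl this, hn, sum_range_alt]
  congr 1
  rw [Nat.mul_div_cancel_left k (by norm_num : 0 < 2)]

lemma w_add_one {n : ℕ} (hE : Even n) (hn : 1 < n) (κ η : ℝ) (x : ZMod n) :
    w n κ η x + w n κ η (x + 1) = κ + η := by
  have : NeZero n := ⟨by omega⟩
  have : Fact (1 < n) := ⟨hn⟩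
  have hval : (x + 1).val = (x.val + 1) % n := by
    rw [ZMod.val_add, ZMod.val_one _]
  have hx : x.val < n := ZMod.val_lt x
  obtain ⟨t, ht⟩ := hE
  rcases Nat.lt_or_ge (x.val + 1) n with h | h
  · rw [w, w, hval, Nat.mod_eq_of_lt h]
    by_cases hp : Even x.val
    · rw [if_pos hp, if_neg (by simp [Nat.even_add_one, hp])]
    · rw [if_neg hp, if_pos (by simp [Nat.even_add_one, hp])]; ring
  · have hxe : x.val = n - 1 := by omega
    have hv0 : (x + 1).val = 0 := by
      have hx1 : x.val + 1 = n := by omega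
      rw [hval, hx1, Nat.mod_self]
    rw [w, w, hv0, hxe]
    rw [if_neg (by rw [Nat.even_sub (by omega)]; simp [Nat.even_iff]; omega),
        if_pos (Even.zero)]
    ring

lemma A_two_mul {n : ℕ} (hE : Even n) (hn : 1 < n) (κ η : ℝ) (u : ZMod n) (k : ℕ) :
    A n κ η u (2 * k) = k * (κ + η) := by
  induction k with
  | zero => simp [A]
  | succ k ih =>
    have h2 : 2 * (k + 1) = 2 * k + 1 + 1 := by ring
    rw [A, h2, Finset.sum_range_succ, Finset.sum_range_succ, ← A, ih]
    have hc : ((2 * k + 1 : ℕ) : ZMod n) = ((2 * k : ℕ) : ZMod n) + 1 := by push_cast; ring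
    rw [hc, ← add_assoc u]
    rw [add_assoc ((k : ℝ) * (κ + η)), w_add_one hE hn κ η (u + ((2 * k : ℕ) : ZMod n))]
    push_cast; ring

lemma sum_A {n : ℕ} [NeZero n] (hE : Even n) (κ η : ℝ) (k : ℕ) :
    ∑ u : ZMod n, A n κ η u k = k * ((n / 2 : ℕ) * (κ + η)) := by
  simp only [A]
  rw [Finset.sum_comm]
  rw [Finset.sum_congr rfl (fun j _ => by
    rw [sum_shift (w n κ η) ((j : ZMod n)), sum_w hE κ η])]
  rw [Finset.sum_const, Finset.card_range, nsmul_eq_mul]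

lemma sum_min (k : ℕ) (hk : 1 ≤ k) :
    2 * ∑ m ∈ Finset.range (2 * k), min m (2 * k - m) = 2 * k ^ 2 := by
  rcases Nat.lt_or_ge k 2 with h2 | h2
  · have : k = 1 := by omega
    subst this
    simp [Finset.sum_range_succ]
  obtain ⟨j, rfl⟩ : ∃ j, k = j + 2 := ⟨k - 2, by omega⟩
  set k := j + 2 with hkdef
  have hsplit : ∑ m ∈ Finset.range (2 * k), min m (2 * k - m)
      = ∑ m ∈ Finset.Ico 0 (k + 1), min m (2 * k - m)
        + ∑ m ∈ Finset.Ico (k + 1) (2 * k), min m (2 * k - m) := by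
    rw [Finset.range_eq_Ico, Finset.sum_Ico_consecutive _ (by omega) (by omega)]
  have h1 : ∑ m ∈ Finset.Ico 0 (k + 1), min m (2 * k - m) = ∑ m ∈ Finset.range (k + 1), m := by
    rw [← Finset.range_eq_Ico]
    exact Finset.sum_congr rfl fun m hm => by
      have := Finset.mem_range.1 hm; omega
  have h2' : ∑ m ∈ Finset.Ico (k + 1) (2 * k), min m (2 * k - m)
      = ∑ i ∈ Finset.range (j + 1), (j + 1 - i) := by
    rw [Finset.sum_Ico_eq_sum_range]
    have hr : 2 * k - (k + 1) = j + 1 := by omega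
    rw [hr]
    exact Finset.sum_congr rfl fun i hi => by
      have := Finset.mem_range.1 hi; omega
  have h3 : ∑ i ∈ Finset.range (j + 1), (j + 1 - i) = ∑ i ∈ Finset.range (j + 1), (i + 1) := by
    rw [← Finset.sum_range_reflect]
    exact Finset.sum_congr rfl fun i hi => by
      have := Finset.mem_range.1 hi; omega
  have e1 : (∑ m ∈ Finset.range (k + 1), m) * 2 = (j + 3) * (j + 2) := by
    rw [Finset.sum_range_id_mul_two]; congr 1
  have e2 : (∑ i ∈ Finset.range (j + 1), i) * 2 = (j + 1) * j := by
    rw [Finset.sum_range_id_mul_two]; congr 1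
  have e3 : ∑ i ∈ Finset.range (j + 1), (i + 1)
      = (∑ i ∈ Finset.range (j + 1), i) + (j + 1) := by
    rw [Finset.sum_add_distrib, Finset.sum_const, Finset.card_range, smul_eq_mul, mul_one]
  rw [hsplit, h1, h2', h3, e3, hkdef]
  zify at e1 e2 ⊢
  linear_combination e1 + e2

lemma ds_shift_eq {n : ℕ} [NeZero n] (hE : Even n) (h4 : 4 ≤ n) (hdvd : 4 ∣ n)
    (κ η : ℝ) (m : ℕ) (hm : m < n) :
    ∑ u : ZMod n, ds n κ η u (u + (m : ZMod n))
      = ((min m (n - m) : ℕ) : ℝ) * ((n / 2 : ℕ) * (κ + η)) := by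
  obtain ⟨t, ht⟩ := hdvd
  have hn1 : 1 < n := by omega
  have hsub : ∀ u : ZMod n, (u + (m : ZMod n)) - u = (m : ZMod n) := fun u => by ring
  have hval : ((m : ZMod n)).val = m := ZMod.val_natCast_of_lt hm
  have hcd : ∀ u : ZMod n, cdist n u (u + (m : ZMod n)) = min m (n - m) := fun u => by
    rw [cdist, hsub, hval]
  rcases Nat.eq_zero_or_pos m with rfl | hm0
  · simp [ds]
  have hne : ∀ u : ZMod n, u ≠ u + (m : ZMod n) := by
    intro u h
    have h0 : (m : ZMod n) = 0 := by
      have := h.symm; rwa [add_eq_left] at this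
    rw [ZMod.natCast_eq_zero_iff] at h0
    have := Nat.le_of_dvd hm0 h0; omega
  rcases Nat.lt_trichotomy (2 * m) n with hlt | heq | hgt
  · have hmin : min m (n - m) = m := by omega
    have hlt2 : m < n / 2 := by omega
    have hds : ∀ u : ZMod n, ds n κ η u (u + (m : ZMod n)) = A n κ η u m := by
      intro u
      rw [ds, if_neg (hne u), hcd u, hmin, if_pos hlt2, if_pos rfl]
    rw [Finset.sum_congr rfl (fun u _ => hds u), sum_A hE κ η m, hmin]
  · have hm2 : m = 2 * t := by omega
    have hmin : min m (n - m) = m := by omega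
    have hnd2 : n / 2 = m := by omega
    have hA : ∀ v : ZMod n, A n κ η v (n / 2) = t * (κ + η) := fun v => by
      rw [hnd2, hm2, A_two_mul hE hn1]
    have hds : ∀ u : ZMod n, ds n κ η u (u + (m : ZMod n)) = t * (κ + η) := by
      intro u
      rw [ds, if_neg (hne u), hcd u, hmin, if_neg (by omega), hA, hA, min_self]
    rw [Finset.sum_congr rfl (fun u _ => hds u), Finset.sum_const]
    simp only [Finset.card_univ, ZMod.card, nsmul_eq_mul]
    rw [hmin, hm2, show n / 2 = 2 * t by omega, ht]
    push_cast; ring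
  · have hmin : min m (n - m) = n - m := by omega
    have hcdlt : n - m < n / 2 := by omega
    have hneq : ∀ u : ZMod n, u + (m : ZMod n) ≠ u + ((n - m : ℕ) : ZMod n) := by
      intro u h
      have h2 : (m : ZMod n) = ((n - m : ℕ) : ZMod n) := add_left_cancel h
      have h4' : ((n - m : ℕ) : ZMod n) = - (m : ZMod n) := by
        have hc : ((n - m : ℕ) : ZMod n) = ((n : ℕ) : ZMod n) - (m : ZMod n) := by
          push_cast [Nat.cast_sub (le_of_lt hm)]; ring
        rw [hc, ZMod.natCast_self]; ring
      rw [h4'] at h2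
      have h5 : ((2 * m : ℕ) : ZMod n) = 0 := by
        push_cast
        rw [two_mul]
        nth_rewrite 1 [h2]
        ring
      rw [ZMod.natCast_eq_zero_iff] at h5
      obtain ⟨c, hc⟩ := h5
      rcases Nat.lt_or_ge c 2 with hc2 | hc2
      · interval_cases c <;> omega
      · have : n * 2 ≤ n * c := Nat.mul_le_mul_left n hc2
        omega
    have hds : ∀ u : ZMod n,
        ds n κ η u (u + (m : ZMod n)) = A n κ η (u + (m : ZMod n)) (n - m) := by
      intro u
      rw [ds, if_neg (hne u), hcd u, hmin, if_pos hcdlt, if_neg (hneq u)]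
    rw [Finset.sum_congr rfl (fun u _ => hds u),
      sum_shift (fun x => A n κ η x (n - m)) ((m : ZMod n)), sum_A hE, hmin]

theorem wiener_index_saturated_cycle_four_dvd
    (n : ℕ) [NeZero n] (hE : Even n) (h4 : 4 ≤ n) (hdvd : 4 ∣ n) :
    ∀ κ η : ℝ, WI n κ η = ((n : ℝ) ^ 3 / 16) * (κ + η) := by
  intro κ η
  obtain ⟨t, ht⟩ := hdvd
  have hk : n = 2 * (2 * t) := by omega
  rw [WI]
  have step1 : ∀ u : ZMod n, ∑ v : ZMod n, ds n κ η u v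
      = ∑ m ∈ Finset.range n, ds n κ η u (u + (m : ZMod n)) := by
    intro u
    rw [← zmod_sum_range (fun x => ds n κ η u (u + x))]
    exact (Fintype.sum_equiv (Equiv.addLeft u) _ _ (fun x => rfl)).symm
  rw [Finset.sum_congr rfl (fun u _ => step1 u), Finset.sum_comm]
  rw [Finset.sum_congr rfl
    (fun m hm => ds_shift_eq hE h4 ⟨t, ht⟩ κ η m (Finset.mem_range.1 hm))]
  rw [← Finset.sum_mul, ← Nat.cast_sum]
  have hS : ∑ m ∈ Finset.range n, min m (n - m) = (2 * t) ^ 2 := by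
    have hmm := sum_min (2 * t) (by omega)
    rw [← hk] at hmm
    omega
  rw [hS, show n / 2 = 2 * t by omega, ht]
  push_cast; ring
end

section
/- Let n be an even natural number with 4 ≤ n and let κ, η be real numbers. For every k with 1 ≤ k < n/2 and k odd, the sum of d_s(u,v) over all unordered pairs {u,v} with cycle distance k equals (n·k/2)·(κ + η). (For each such k, exactly n/2 of the n pairs have geodesic weight ((k+1)/2)·κ + ((k−1)/2)·η and the other n/2 pairs have geodesic weight ((k+1)/2)·η + ((k−1)/2)·κ.) -/
lemma sum_univ_zmod (n : ℕ) [NeZero n] (f : ZMod n → ℝ) :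
    ∑ u : ZMod n, f u = ∑ i ∈ Finset.range n, f (i : ZMod n) := by
  refine (Finset.sum_bij' (fun (i : ℕ) (_ : i ∈ Finset.range n) => ((i : ℕ) : ZMod n))
    (fun (u : ZMod n) (_ : u ∈ Finset.univ) => u.val) ?_ ?_ ?_ ?_ ?_).symm
  · intro i _; exact Finset.mem_univ _
  · intro u _; exact Finset.mem_range.mpr (ZMod.val_lt u)
  · intro i hi; exact ZMod.val_natCast_of_lt (Finset.mem_range.mp hi)
  · intro u _; exact ZMod.natCast_zmod_val u
  · intro i _; rfl

lemma sum_if_even (κ η : ℝ) (t : ℕ) :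
    ∑ i ∈ Finset.range (2 * t), (if Even i then κ else η) = t * (κ + η) := by
  induction t with
  | zero => simp
  | succ t ih =>
    have h : 2 * (t + 1) = (2 * t) + 1 + 1 := by ring
    rw [h, Finset.sum_range_succ, Finset.sum_range_succ, ih]
    rw [if_pos (even_two_mul t), if_neg (by simp [Nat.even_add_one])]
    push_cast; ring

lemma sum_w_eq (n : ℕ) [NeZero n] (κ η : ℝ) (t : ℕ) (ht : n = 2 * t) :
    ∑ u : ZMod n, w n κ η u = t * (κ + η) := by
  rw [sum_univ_zmod]
  have : ∑ i ∈ Finset.range n, w n κ η (i : ZMod n)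
      = ∑ i ∈ Finset.range n, (if Even i then κ else η) := by
    refine Finset.sum_congr rfl fun i hi => ?_
    unfold w
    rw [ZMod.val_natCast_of_lt (Finset.mem_range.mp hi)]
  rw [this, ht]; exact sum_if_even κ η t

lemma sum_A_eq (n : ℕ) [NeZero n] (κ η : ℝ) (k : ℕ) :
    ∑ u : ZMod n, A n κ η u k = (k : ℝ) * ∑ u : ZMod n, w n κ η u := by
  unfold A
  rw [Finset.sum_comm]
  have : ∀ j : ℕ, ∑ u : ZMod n, w n κ η (u + (j : ZMod n)) = ∑ u : ZMod n, w n κ η u := by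
    intro j
    exact Fintype.sum_equiv (Equiv.addRight (j : ZMod n)) _ _ (fun u => rfl)
  simp only [this, Finset.sum_const, Finset.card_range, nsmul_eq_mul]

theorem sum_ds_odd_distance
    (n : ℕ) [NeZero n] (hE : Even n) (h4 : 4 ≤ n) (κ η : ℝ)
    (k : ℕ) (hk1 : 1 ≤ k) (hk2 : k < n / 2) (hko : Odd k) :
    (1 / 2) * ∑ u : ZMod n, ∑ v : ZMod n,
        (if cdist n u v = k then ds n κ η u v else 0)
      = ((n : ℝ) * (k : ℝ) / 2) * (κ + η) := by
  obtain ⟨t, ht⟩ := hE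
  have ht2 : n = 2 * t := by omega
  have h2k : 2 * k < n := by omega
  have hkn : k < n := by omega
  have hnk : n - k < n := by omega
  set m₁ : ZMod n := ((k : ℕ) : ZMod n) with hm₁
  set m₂ : ZMod n := ((n - k : ℕ) : ZMod n) with hm₂
  have hv₁ : m₁.val = k := ZMod.val_natCast_of_lt hkn
  have hv₂ : m₂.val = n - k := ZMod.val_natCast_of_lt hnk
  have hne : m₁ ≠ m₂ := by
    intro h
    have := congrArg ZMod.val h
    rw [hv₁, hv₂] at this; omega
  -- key: for each u, the inner sum equals A u k + A (u+m₂) k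
  have key : ∀ u : ZMod n,
      (∑ v : ZMod n, (if cdist n u v = k then ds n κ η u v else 0))
        = A n κ η u k + A n κ η (u + m₂) k := by
    intro u
    have hzero : ∀ v ∈ Finset.univ, v ∉ ({u + m₁, u + m₂} : Finset (ZMod n)) →
        (if cdist n u v = k then ds n κ η u v else 0) = 0 := by
      intro v _ hv
      rw [Finset.mem_insert, Finset.mem_singleton] at hv
      push_neg at hv
      rw [if_neg]
      intro hc
      unfold cdist at hc
      have hval : (v - u).val < n := ZMod.val_lt _
      have : (v - u).val = k ∨ (v - u).val = n - k := by omega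
      rcases this with h | h
      · apply hv.1
        have : v - u = m₁ := by
          have := ZMod.natCast_zmod_val (v - u)
          rw [h] at this; rw [hm₁, ← this]
        rw [← this]; ring
      · apply hv.2
        have : v - u = m₂ := by
          have := ZMod.natCast_zmod_val (v - u)
          rw [h] at this; rw [hm₂, ← this]
        rw [← this]; ring
    rw [← Finset.sum_subset (Finset.subset_univ ({u + m₁, u + m₂} : Finset (ZMod n))) hzero]
    have hpair : u + m₁ ≠ u + m₂ := by
      intro h; exact hne (by exact add_left_cancel h)
    rw [Finset.sum_pair hpair]
    have hc1 : cdist n u (u + m₁) = k := by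
      unfold cdist
      rw [add_sub_cancel_left, hv₁]
      omega
    have hc2 : cdist n u (u + m₂) = k := by
      unfold cdist
      rw [add_sub_cancel_left, hv₂]
      omega
    have hd1 : ds n κ η u (u + m₁) = A n κ η u k := by
      unfold ds
      rw [if_neg, hc1, if_pos hk2, if_pos rfl]
      · intro h
        have : m₁ = 0 := by
          have := h.symm
          rwa [add_eq_left] at this
        rw [hm₁] at this
        have := congrArg ZMod.val this
        rw [hv₁, ZMod.val_zero] at this; omega
    have hd2 : ds n κ η (u) (u + m₂) = A n κ η (u + m₂) k := by
      unfold ds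
      rw [if_neg, hc2, if_pos hk2, if_neg]
      · intro h
        have : m₂ = m₁ := by
          rwa [← hm₁, add_right_inj] at h
        exact hne this.symm
      · intro h
        have : m₂ = 0 := by
          have := h.symm
          rwa [add_eq_left] at this
        have := congrArg ZMod.val this
        rw [hv₂, ZMod.val_zero] at this; omega
    rw [if_pos hc1, if_pos hc2, hd1, hd2]
  simp only [key]
  rw [Finset.sum_add_distrib]
  have hshift : ∑ u : ZMod n, A n κ η (u + m₂) k = ∑ u : ZMod n, A n κ η u k :=
    Fintype.sum_equiv (Equiv.addRight m₂) _ _ (fun u => rfl)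
  rw [hshift, sum_A_eq, sum_w_eq n κ η t ht2]
  have : (n : ℝ) = 2 * t := by rw [ht2]; push_cast; ring
  rw [this]; ring
end

section
/- Let n be an even natural number with 4 ≤ n such that n ≡ 2 (mod 4), and let κ, η be real numbers with η ≤ κ. Then for every u : ZMod n, the antipodal geodesic weight satisfies d_s(u, u + n/2) = ((n−2)/4)·κ + ((n+2)/4)·η, and the sum of d_s over the n/2 antipodal unordered pairs equals (n/2)·( ((n−2)/4)·κ + ((n+2)/4)·η ). -/
lemma sum_parity (κ η : ℝ) (s t : ℕ) :
    ∑ j ∈ Finset.range (2*t+1), (if Even (s+j) then κ else η)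
      = t*(κ+η) + (if Even s then κ else η) := by
  induction t with
  | zero => simp
  | succ t ih =>
    have h1 : 2*(t+1)+1 = (2*t+1) + 1 + 1 := by ring
    rw [h1, Finset.sum_range_succ, Finset.sum_range_succ, ih]
    have e1 : Even (s + (2*t+1)) ↔ ¬ Even s := by
      simp only [Nat.even_iff]; omega
    have e2 : Even (s + (2*t+1+1)) ↔ Even s := by
      simp only [Nat.even_iff]; omega
    by_cases hs : Even s <;> simp only [e1, e2, hs, if_true, if_false,
      not_true, not_false_iff] <;> push_cast <;> ring

lemma A_eq (n : ℕ) [NeZero n] (hn2 : 2 ∣ n) (κ η : ℝ) (u : ZMod n) (k : ℕ) :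
    A n κ η u k = ∑ j ∈ Finset.range k, (if Even (u.val + j) then κ else η) := by
  unfold A w
  refine Finset.sum_congr rfl fun j _ => ?_
  have key : Even (u + (j : ZMod n)).val ↔ Even (u.val + j) := by
    rw [ZMod.val_add, ZMod.val_natCast]
    simp only [Nat.even_iff]
    rw [Nat.mod_mod_of_dvd _ hn2, Nat.add_mod, Nat.mod_mod_of_dvd _ hn2, ← Nat.add_mod]
  simp only [key]

theorem antipodal_contribution_two_mod_four
    (n : ℕ) [NeZero n] (hE : Even n) (h4 : 4 ≤ n) (hmod : n % 4 = 2)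
    (κ η : ℝ) (hηκ : η ≤ κ) :
    (∀ u : ZMod n, ds n κ η u (u + ((n / 2 : ℕ) : ZMod n))
        = (((n : ℝ) - 2) / 4) * κ + (((n : ℝ) + 2) / 4) * η) ∧
    (1 / 2) * ∑ u : ZMod n, ds n κ η u (u + ((n / 2 : ℕ) : ZMod n))
      = ((n : ℝ) / 2) * ((((n : ℝ) - 2) / 4) * κ + (((n : ℝ) + 2) / 4) * η) := by
  have hn2 : 2 ∣ n := hE.two_dvd
  set t := n / 4 with ht
  have hnt : n = 4 * t + 2 := by omega
  have hm : n / 2 = 2 * t + 1 := by omega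
  have hmltn : n / 2 < n := by omega
  have hnR : (n : ℝ) = 4 * t + 2 := by exact_mod_cast congrArg (Nat.cast : ℕ → ℝ) hnt
  have hA : ∀ v : ZMod n, A n κ η v (n / 2)
      = t * (κ + η) + (if Even v.val then κ else η) := by
    intro v
    rw [A_eq n hn2, hm, sum_parity]
  have hmain : ∀ u : ZMod n, ds n κ η u (u + ((n / 2 : ℕ) : ZMod n))
      = (((n : ℝ) - 2) / 4) * κ + (((n : ℝ) + 2) / 4) * η := by
    intro u
    set v := u + ((n / 2 : ℕ) : ZMod n) with hv
    have hvu : v - u = ((n / 2 : ℕ) : ZMod n) := by rw [hv]; ring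
    have hval : (v - u).val = n / 2 := by
      rw [hvu, ZMod.val_natCast, Nat.mod_eq_of_lt hmltn]
    have hne : u ≠ v := by
      intro h
      have : (v - u).val = 0 := by rw [← h, sub_self, ZMod.val_zero]
      omega
    have hcd : cdist n u v = n / 2 := by
      unfold cdist; rw [hval]; omega
    have hparity : Even v.val ↔ ¬ Even u.val := by
      rw [hv, ZMod.val_add, ZMod.val_natCast, Nat.mod_eq_of_lt hmltn]
      simp only [Nat.even_iff]
      rw [Nat.mod_mod_of_dvd _ hn2, hm]
      omega
    rw [ds, if_neg hne, hcd, if_neg (lt_irrefl _), hA u, hA v]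
    by_cases hu : Even u.val
    · have hv' : ¬ Even v.val := by simp [hparity, hu]
      rw [if_pos hu, if_neg hv', min_eq_right (by linarith)]
      rw [hnR]; push_cast; ring
    · have hv' : Even v.val := hparity.mpr hu
      rw [if_neg hu, if_pos hv', min_eq_left (by linarith)]
      rw [hnR]; push_cast; ring
  refine ⟨hmain, ?_⟩
  rw [Finset.sum_congr rfl fun u _ => hmain u, Finset.sum_const,
    Finset.card_univ, ZMod.card, nsmul_eq_mul]
  ring
end

section
/- Let n be an even natural number with 4 ≤ n and let κ, η be real numbers with 0 < η ≤ κ. Then the Wiener index of the saturated fuzzy cycle is strictly less than the value claimed by the original (incorrect) theorem: WI(n,κ,η) < (n·((n+3)^2 − 6)/16)·(κ + η). In particular the original formula WI(n,κ,η) = (n·((n+3)^2 − 6)/16)·(κ + η) fails for every such n, κ, η. -/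
lemma pair_sum (n : ℕ) [NeZero n] (κ η : ℝ) (hE : Even n) (h2 : 2 ≤ n) (i : ZMod n) :
    w n κ η i + w n κ η (i + 1) = κ + η := by
  have h1 : (1 : ZMod n).val = 1 := ZMod.val_one'' (by omega)
  have hv : (i + 1).val = (i.val + 1) % n := by rw [ZMod.val_add, h1]
  have hlt : i.val < n := ZMod.val_lt i
  obtain ⟨s, hs⟩ := hE
  have hpar : Even ((i + 1).val) ↔ ¬ Even i.val := by
    rcases Nat.lt_or_ge (i.val + 1) n with h | h
    · rw [hv, Nat.mod_eq_of_lt h, Nat.even_iff, Nat.even_iff]; omega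
    · have hn : i.val + 1 = n := by omega
      rw [hv, hn, Nat.mod_self, Nat.even_iff, Nat.even_iff]; omega
  by_cases hi : Even i.val
  · rw [w, w, if_pos hi, if_neg (by simp [hpar, hi])]
  · rw [w, w, if_neg hi, if_pos (hpar.mpr hi)]; ring

lemma A_le (n : ℕ) [NeZero n] (κ η : ℝ) (hE : Even n) (h2 : 2 ≤ n)
    (hη : 0 < η) (hηκ : η ≤ κ) (u : ZMod n) (k : ℕ) :
    A n κ η u k ≤ (((k + 1) / 2 : ℕ) : ℝ) * (κ + η) := by
  induction k using Nat.twoStepInduction generalizing u with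
  | zero => simp [A]
  | one =>
    have hA : A n κ η u 1 = w n κ η u := by simp [A]
    rw [hA]
    have : w n κ η u ≤ κ := by unfold w; split <;> linarith
    norm_num
    linarith
  | more k ih _ =>
    have hstep : A n κ η u (k + 2) = A n κ η u k
        + (w n κ η (u + (k : ZMod n)) + w n κ η (u + (k : ZMod n) + 1)) := by
      rw [A, Finset.sum_range_succ, Finset.sum_range_succ]
      have : ((k + 1 : ℕ) : ZMod n) = (k : ZMod n) + 1 := by push_cast; ring
      rw [this, ← add_assoc, A]
      ring
    rw [hstep, pair_sum n κ η hE h2]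
    have hc : ((k + 2 + 1) / 2 : ℕ) = (k + 1) / 2 + 1 := by omega
    rw [hc]
    push_cast
    have := ih u
    linarith

lemma ds_le (n : ℕ) [NeZero n] (κ η : ℝ) (hE : Even n) (h2 : 2 ≤ n)
    (hη : 0 < η) (hηκ : η ≤ κ) (u v : ZMod n) :
    ds n κ η u v ≤ (((cdist n u v + 1) / 2 : ℕ) : ℝ) * (κ + η) := by
  have hkn : (0:ℝ) < κ + η := by linarith
  unfold ds
  split_ifs with h0 hhalf hg
  · exact mul_nonneg (Nat.cast_nonneg _) hkn.le
  · exact A_le n κ η hE h2 hη hηκ u _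
  · exact A_le n κ η hE h2 hη hηκ v _
  · have hle : cdist n u v ≤ n / 2 := by
      have := ZMod.val_lt (v - u); unfold cdist; omega
    have heq : cdist n u v = n / 2 := by omega
    calc min (A n κ η u (n / 2)) (A n κ η v (n / 2)) ≤ A n κ η u (n / 2) := min_le_left _ _
      _ ≤ (((n / 2 + 1) / 2 : ℕ) : ℝ) * (κ + η) := A_le n κ η hE h2 hη hηκ u _
      _ = (((cdist n u v + 1) / 2 : ℕ) : ℝ) * (κ + η) := by rw [heq]

lemma sumMin (t : ℕ) : ∑ i ∈ Finset.range (2 * t), min i (2 * t - i) = t * t := by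
  have hsplit : ∑ i ∈ Finset.range (2 * t), min i (2 * t - i)
      = ∑ i ∈ Finset.Ico 0 t, min i (2 * t - i) + ∑ i ∈ Finset.Ico t (2 * t), min i (2 * t - i) := by
    rw [Finset.range_eq_Ico, ← Finset.sum_Ico_consecutive _ (Nat.zero_le t) (by omega)]
  rw [hsplit]
  have h1 : ∑ i ∈ Finset.Ico 0 t, min i (2 * t - i) = ∑ i ∈ Finset.range t, i := by
    rw [← Finset.range_eq_Ico]
    apply Finset.sum_congr rfl
    intro i hi
    simp only [Finset.mem_range] at hi
    omega
  have h2 : ∑ i ∈ Finset.Ico t (2 * t), min i (2 * t - i) = ∑ j ∈ Finset.range t, (t - j) := by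
    rw [Finset.sum_Ico_eq_sum_range]
    apply Finset.sum_congr (by congr 1; omega)
    intro j hj
    simp only [Finset.mem_range] at hj
    omega
  have h3 : ∑ j ∈ Finset.range t, (t - j) = ∑ j ∈ Finset.range t, (j + 1) := by
    rw [← Finset.sum_range_reflect]
    apply Finset.sum_congr rfl
    intro j hj
    simp only [Finset.mem_range] at hj
    omega
  have h4 : (∑ i ∈ Finset.range t, i) * 2 = t * (t - 1) := Finset.sum_range_id_mul_two t
  rw [h1, h2, h3]
  have h5 : ∑ j ∈ Finset.range t, (j + 1) = (∑ j ∈ Finset.range t, j) + t := by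
    rw [Finset.sum_add_distrib]; simp
  rcases t with _ | s
  · simp
  · simp only [Nat.add_sub_cancel] at h4
    have hr : (s + 1) * s + (s + 1) = (s + 1) * (s + 1) := by ring
    omega

lemma sum_val (n : ℕ) [NeZero n] (f : ℕ → ℕ) :
    ∑ m : ZMod n, f m.val = ∑ i ∈ Finset.range n, f i := by
  refine Finset.sum_nbij' (fun m => m.val) (fun i => (i : ZMod n)) ?_ ?_ ?_ ?_ ?_
  · intro m _; simp [Finset.mem_range, ZMod.val_lt]
  · intro i _; simp
  · intro m _; simp [ZMod.natCast_zmod_val]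
  · intro i hi; simp only [Finset.mem_range] at hi
    exact ZMod.val_cast_of_lt hi
  · intro m _; rfl

theorem original_formula_fails
    (n : ℕ) [NeZero n] (hE : Even n) (h4 : 4 ≤ n)
    (κ η : ℝ) (hη : 0 < η) (hηκ : η ≤ κ) :
    WI n κ η < ((n : ℝ) * (((n : ℝ) + 3) ^ 2 - 6) / 16) * (κ + η) ∧
    WI n κ η ≠ ((n : ℝ) * (((n : ℝ) + 3) ^ 2 - 6) / 16) * (κ + η) := by
  obtain ⟨t, ht⟩ := hE
  have hE' : Even n := ⟨t, ht⟩
  have h2 : 2 ≤ n := by omega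
  have ht2 : 2 ≤ t := by omega
  have hkn : (0:ℝ) < κ + η := by linarith
  -- sum of cycle distances from a fixed vertex
  have hcd : ∀ u : ZMod n, ∑ v : ZMod n, cdist n u v = t * t := by
    intro u
    have e1 : ∑ v : ZMod n, cdist n u v
        = ∑ m : ZMod n, (fun i => min i (n - i)) m.val :=
      Fintype.sum_equiv (Equiv.subRight u) _ _ (fun v => rfl)
    rw [e1, sum_val n (fun i => min i (n - i))]
    rw [show n = 2 * t by omega]
    exact sumMin t
  -- bound on the inner sum
  have hinner : ∀ u : ZMod n, ∑ v : ZMod n, ds n κ η u v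
      ≤ (((t * t : ℕ) : ℝ) + n) / 2 * (κ + η) := by
    intro u
    have hb : ∑ v : ZMod n, ds n κ η u v
        ≤ ∑ v : ZMod n, ((cdist n u v : ℝ) + 1) / 2 * (κ + η) := by
      apply Finset.sum_le_sum
      intro v _
      refine le_trans (ds_le n κ η hE' h2 hη hηκ u v) ?_
      apply mul_le_mul_of_nonneg_right _ hkn.le
      have hbn : ((cdist n u v + 1) / 2 : ℕ) * 2 ≤ cdist n u v + 1 := by omega
      have := (Nat.cast_le (α := ℝ)).mpr hbn
      push_cast at this
      linarith
    have hb2 : ∑ v : ZMod n, ((cdist n u v : ℝ) + 1) / 2 * (κ + η)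
        = (((t * t : ℕ) : ℝ) + n) / 2 * (κ + η) := by
      rw [← Finset.sum_mul, ← Finset.sum_div]
      congr 2
      rw [Finset.sum_add_distrib, Finset.sum_const, Finset.card_univ, ZMod.card,
        nsmul_eq_mul, mul_one]
      congr 1
      rw [← Nat.cast_sum, hcd u]
    linarith [hb, hb2.le, hb2.ge]
  have hW : WI n κ η ≤ 1 / 2 * ((n : ℝ) * ((((t * t : ℕ) : ℝ) + n) / 2 * (κ + η))) := by
    unfold WI
    have hs : ∑ u : ZMod n, ∑ v : ZMod n, ds n κ η u v
        ≤ ∑ _u : ZMod n, (((t * t : ℕ) : ℝ) + n) / 2 * (κ + η) :=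
      Finset.sum_le_sum (fun u _ => hinner u)
    rw [Finset.sum_const, Finset.card_univ, ZMod.card, nsmul_eq_mul] at hs
    linarith
  have hnr : (n : ℝ) = 2 * t := by exact_mod_cast ht.trans (by omega : t + t = 2 * t)
  have htr : (2:ℝ) ≤ (t : ℝ) := by exact_mod_cast ht2
  have hlt : 1 / 2 * ((n : ℝ) * ((((t * t : ℕ) : ℝ) + n) / 2 * (κ + η)))
      < ((n : ℝ) * (((n : ℝ) + 3) ^ 2 - 6) / 16) * (κ + η) := by
    rw [hnr]
    push_cast
    have hP : (0:ℝ) < (4 * (t:ℝ) ^ 2 + 3 * t) * (κ + η) := by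
      apply mul_pos _ hkn
      nlinarith
    nlinarith [hP]
  have hmain : WI n κ η < ((n : ℝ) * (((n : ℝ) + 3) ^ 2 - 6) / 16) * (κ + η) :=
    lt_of_le_of_lt hW hlt
  exact ⟨hmain, ne_of_lt hmain⟩
end
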